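/- The mixed volume of the polytopes (C_{n,1},...,C_{n,n}), where C_{n,i} = I_1 + ... + I_{i-1} + 2I_i + I_{i+1} + ... + I_n and I_j = conv(0, e_j) ⊂ ℝ^n, equals the sum over all permutations σ in S_n of 2^{Fix(σ)}, where Fix(σ) is the number of fixed points of σ. -/

import Mathlib

open MeasureTheory Pointwise

/-- Mixed volume of `n` convex bodies in `ℝ^n`, normalized so that the mixed volume of the
`n` coordinate unit segments is `1` (polarization formula). -/
noncomputable def mixedVolume {n : ℕ} (K : Fin n → Set (EuclideanSpace ℝ (Fin n))) : ℝ :=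
  ∑ S : Finset (Fin n), (-1 : ℝ) ^ (n - S.card) * (volume (∑ i ∈ S, K i)).toReal

/-- The unit segment `I_j = conv(0, e_j) ⊆ ℝ^n`. -/
noncomputable def unitSegment (n : ℕ) (j : Fin n) : Set (EuclideanSpace ℝ (Fin n)) :=
  segment ℝ 0 (EuclideanSpace.single j 1)

/-- The stretched cube `C_{n,i} = I_1 + ⋯ + 2I_i + ⋯ + I_n`. -/
noncomputable def stretchedCube (n : ℕ) (i : Fin n) : Set (EuclideanSpace ℝ (Fin n)) :=
  ∑ j : Fin n, if j = i then (2 : ℝ) • unitSegment n j else unitSegment n j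

lemma smul_seg {E : Type*} [AddCommGroup E] [Module ℝ E] (a : ℝ) (v : E) :
    a • segment ℝ (0:E) v = segment ℝ 0 (a • v) := by
  ext x
  simp only [Set.mem_smul_set, segment_eq_image, smul_zero, Set.mem_image, smul_smul,
    zero_add, smul_eq_mul, mul_zero, sub_zero]
  constructor
  · rintro ⟨y, ⟨t, ht, rfl⟩, rfl⟩
    exact ⟨t, ht, by rw [mul_smul]; exact smul_comm _ _ _⟩
  · rintro ⟨t, ht, rfl⟩
    exact ⟨t • v, ⟨t, ht, rfl⟩, by rw [mul_smul]; exact smul_comm _ _ _⟩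

lemma segcoord (n : ℕ) (c : ℝ) (hc : 0 ≤ c) (j : Fin n) :
    c • unitSegment n j =
      {x : EuclideanSpace ℝ (Fin n) | x j ∈ Set.Icc 0 c ∧ ∀ k, k ≠ j → x k = 0} := by
  rw [unitSegment, smul_seg]
  ext x
  simp only [segment_eq_image, smul_zero, zero_add, sub_zero, Set.mem_image,
    Set.mem_setOf_eq, Set.mem_Icc]
  constructor
  · rintro ⟨t, ht, rfl⟩
    constructor
    · have hx : (t • (c • EuclideanSpace.single j 1) : EuclideanSpace ℝ (Fin n)) j = t * c := by
        simp only [PiLp.smul_apply, EuclideanSpace.single_apply, smul_eq_mul]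
        simp
      rw [hx]
      exact ⟨mul_nonneg ht.1 hc, mul_le_of_le_one_left hc ht.2⟩
    · intro k hk
      simp [PiLp.smul_apply, EuclideanSpace.single_apply, hk]
  · rintro ⟨⟨h0, h1⟩, hz⟩
    rcases eq_or_lt_of_le hc with hc0 | hc0
    · refine ⟨0, ⟨le_refl 0, zero_le_one⟩, ?_⟩
      have hxj : x j = 0 := le_antisymm (by rw [← hc0] at h1; exact h1) h0
      ext k
      by_cases hk : k = j
      · subst hk; simpa using hxj.symm
      · simpa [PiLp.smul_apply, EuclideanSpace.single_apply, hk] using (hz k hk).symm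
    · refine ⟨x j / c, ⟨div_nonneg h0 hc, div_le_one_of_le₀ h1 hc⟩, ?_⟩
      ext k
      by_cases hk : k = j
      · subst hk
        simp only [PiLp.smul_apply, EuclideanSpace.single_apply, smul_eq_mul]
        simp only [if_true, eq_self_iff_true, mul_one]
        field_simp
      · simp [PiLp.smul_apply, EuclideanSpace.single_apply, hk, hz k hk]

lemma sum_box (n : ℕ) (c : Fin n → ℝ) (hc : ∀ j, 0 ≤ c j) (t : Finset (Fin n)) :
    ∑ j ∈ t, (c j) • unitSegment n j =
      {x : EuclideanSpace ℝ (Fin n) |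
        (∀ j ∈ t, x j ∈ Set.Icc 0 (c j)) ∧ ∀ j ∉ t, x j = 0} := by
  classical
  induction t using Finset.induction_on with
  | empty =>
    ext x
    simp only [Finset.sum_empty, Finset.notMem_empty, Set.mem_setOf_eq, false_implies,
      implies_true, true_and, not_false_iff, forall_true_left]
    rw [Set.mem_zero]
    constructor
    · rintro rfl j
      rfl
    · intro h
      exact PiLp.ext fun j => h j
  | @insert a t ha ih =>
    rw [Finset.sum_insert ha, ih, segcoord n (c a) (hc a) a]
    ext x
    simp only [Set.mem_add, Set.mem_setOf_eq, Finset.mem_insert]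
    constructor
    · rintro ⟨y, ⟨hya, hyz⟩, z, ⟨hz1, hz2⟩, rfl⟩
      have hza : z a = 0 := hz2 a ha
      refine ⟨?_, ?_⟩
      · rintro j (rfl | hj)
        · simpa [PiLp.add_apply, hza] using hya
        · have hyj : y j = 0 := hyz j (fun h => ha (h ▸ hj))
          simpa [PiLp.add_apply, hyj] using hz1 j hj
      · intro j hj
        push_neg at hj
        have hyj : y j = 0 := hyz j hj.1
        have hzj : z j = 0 := hz2 j hj.2
        simp [PiLp.add_apply, hyj, hzj]
    · rintro ⟨h1, h2⟩
      refine ⟨EuclideanSpace.single a (x a), ⟨?_, ?_⟩,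
        x - EuclideanSpace.single a (x a), ⟨?_, ?_⟩, ?_⟩
      · simpa [EuclideanSpace.single_apply] using h1 a (Or.inl rfl)
      · intro k hk
        simp [EuclideanSpace.single_apply, hk]
      · intro j hj
        have hja : j ≠ a := fun h => ha (h ▸ hj)
        simpa [PiLp.sub_apply, EuclideanSpace.single_apply, hja] using h1 j (Or.inr hj)
      · intro j hj
        by_cases hja : j = a
        · subst hja
          simp [PiLp.sub_apply, EuclideanSpace.single_apply]
        · have : x j = 0 := h2 j (by tauto)
          simp [PiLp.sub_apply, EuclideanSpace.single_apply, hja, this]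
      · abel

lemma vol_box (n : ℕ) (c : Fin n → ℝ) :
    volume {x : EuclideanSpace ℝ (Fin n) | ∀ j, x j ∈ Set.Icc 0 (c j)} =
      ∏ j, ENNReal.ofReal (c j) := by
  have hmp := EuclideanSpace.volume_preserving_symm_measurableEquiv_toLp (Fin n)
  have hs : MeasurableSet (Set.univ.pi fun j => Set.Icc (0:ℝ) (c j)) :=
    MeasurableSet.univ_pi fun j => measurableSet_Icc
  have hset : {x : EuclideanSpace ℝ (Fin n) | ∀ j, x j ∈ Set.Icc 0 (c j)} =
      (MeasurableEquiv.toLp 2 (Fin n → ℝ)).symm ⁻¹' (Set.univ.pi fun j => Set.Icc 0 (c j)) := by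
    ext x
    simp only [Set.mem_setOf_eq, Set.mem_preimage, Set.mem_pi, Set.mem_univ, true_implies]
    exact Iff.rfl
  rw [hset, hmp.measure_preimage hs.nullMeasurableSet, volume_pi_pi]
  simp [Real.volume_Icc]

lemma finset_sum_smul {E ι : Type*} [AddCommGroup E] [Module ℝ E] {K : Set E}
    (hK : Convex ℝ K) (hne : K.Nonempty) (s : Finset ι) (a : ι → ℝ) (ha : ∀ i, 0 ≤ a i) :
    ∑ i ∈ s, a i • K = (∑ i ∈ s, a i) • K := by
  classical
  induction s using Finset.induction_on with
  | empty => simp [Set.zero_smul_set hne]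
  | @insert b s hb ih =>
    rw [Finset.sum_insert hb, Finset.sum_insert hb, ih,
      hK.add_smul (ha b) (Finset.sum_nonneg fun i _ => ha i)]

lemma sum_stretched (n : ℕ) (S : Finset (Fin n)) :
    ∑ i ∈ S, stretchedCube n i =
      ∑ j : Fin n, ((S.card : ℝ) + if j ∈ S then 1 else 0) • unitSegment n j := by
  classical
  have hconv : ∀ j, Convex ℝ (unitSegment n j) := fun j => convex_segment _ _
  have hne : ∀ j : Fin n, (unitSegment n j).Nonempty :=
    fun j => ⟨0, left_mem_segment ℝ _ _⟩
  have h1 : ∀ i, stretchedCube n i =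
      ∑ j : Fin n, ((if j = i then (2:ℝ) else 1) • unitSegment n j) := by
    intro i
    unfold stretchedCube
    refine Finset.sum_congr rfl fun j _ => ?_
    split_ifs with h <;> simp
  calc ∑ i ∈ S, stretchedCube n i
      = ∑ i ∈ S, ∑ j : Fin n, ((if j = i then (2:ℝ) else 1) • unitSegment n j) :=
        Finset.sum_congr rfl fun i _ => h1 i
    _ = ∑ j : Fin n, ∑ i ∈ S, ((if j = i then (2:ℝ) else 1) • unitSegment n j) :=
        Finset.sum_comm
    _ = ∑ j : Fin n, (∑ i ∈ S, (if j = i then (2:ℝ) else 1)) • unitSegment n j := by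
        refine Finset.sum_congr rfl fun j _ => ?_
        rw [finset_sum_smul (hconv j) (hne j)]
        intro i
        split_ifs <;> norm_num
    _ = ∑ j : Fin n, ((S.card : ℝ) + if j ∈ S then 1 else 0) • unitSegment n j := by
        refine Finset.sum_congr rfl fun j _ => ?_
        congr 1
        have : ∀ i ∈ S, (if j = i then (2:ℝ) else 1) = 1 + if j = i then 1 else 0 := by
          intro i _
          split_ifs <;> norm_num
        rw [Finset.sum_congr rfl this, Finset.sum_add_distrib, Finset.sum_const,
          Finset.sum_ite_eq, nsmul_eq_mul, mul_one]

lemma vol_sum (n : ℕ) (S : Finset (Fin n)) :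
    (volume (∑ i ∈ S, stretchedCube n i)).toReal =
      ∏ j : Fin n, ((S.card : ℝ) + if j ∈ S then 1 else 0) := by
  classical
  have hnn : ∀ j : Fin n, (0:ℝ) ≤ (S.card : ℝ) + if j ∈ S then 1 else 0 := by
    intro j
    have : (0:ℝ) ≤ (S.card : ℝ) := Nat.cast_nonneg _
    split_ifs <;> linarith
  rw [sum_stretched, sum_box n _ hnn Finset.univ]
  have hset : {x : EuclideanSpace ℝ (Fin n) |
        (∀ j ∈ Finset.univ, x j ∈ Set.Icc 0 ((S.card : ℝ) + if j ∈ S then 1 else 0)) ∧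
          ∀ j ∉ Finset.univ, x j = 0} =
      {x : EuclideanSpace ℝ (Fin n) |
        ∀ j, x j ∈ Set.Icc 0 ((S.card : ℝ) + if j ∈ S then 1 else 0)} := by
    ext x
    simp
  rw [hset, vol_box]
  rw [ENNReal.toReal_prod]
  exact Finset.prod_congr rfl fun j _ => ENNReal.toReal_ofReal (hnn j)

lemma comb_inner (n : ℕ) (g : Fin n → Fin n) :
    ∑ S : Finset (Fin n), (-1:ℝ)^(n - S.card) * (if ∀ j, g j ∈ S then 1 else 0) =
      if Function.Surjective g then 1 else 0 := by
  classical
  have hinv : Function.Involutive (fun S : Finset (Fin n) => Sᶜ) := fun S => compl_compl S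
  rw [← Equiv.sum_comp (Function.Involutive.toPerm _ hinv)
    (fun S : Finset (Fin n) => (-1:ℝ)^(n - S.card) * (if ∀ j, g j ∈ S then 1 else 0))]
  have hcard : ∀ S : Finset (Fin n), n - (Sᶜ).card = S.card := by
    intro S
    rw [Finset.card_compl, Fintype.card_fin, Nat.sub_sub_self (by simpa using Finset.card_le_univ S)]
  set R : Finset (Fin n) := Finset.image g Finset.univ with hR
  have hcond : ∀ S : Finset (Fin n), (∀ j, g j ∈ Sᶜ) ↔ S ⊆ Rᶜ := by
    intro S
    constructor
    · intro h x hx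
      rw [Finset.mem_compl, hR, Finset.mem_image]
      rintro ⟨j, -, rfl⟩
      exact (Finset.mem_compl.mp (h j)) hx
    · intro h j
      rw [Finset.mem_compl]
      intro hj
      have := h hj
      rw [Finset.mem_compl, hR, Finset.mem_image] at this
      exact this ⟨j, Finset.mem_univ j, rfl⟩
  have step : ∀ S : Finset (Fin n),
      (fun S : Finset (Fin n) => (-1:ℝ)^(n - S.card) * (if ∀ j, g j ∈ S then 1 else 0))
        (Function.Involutive.toPerm _ hinv S) =
      (if S ⊆ Rᶜ then (-1:ℝ)^S.card else 0) := by
    intro S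
    simp only [Function.Involutive.coe_toPerm]
    rw [hcard S]
    simp only [hcond S]
    split_ifs <;> ring
  rw [Finset.sum_congr rfl fun S _ => step S]
  have hsub : ∑ S : Finset (Fin n), (if S ⊆ Rᶜ then (-1:ℝ)^S.card else 0) =
      ∑ S ∈ (Rᶜ).powerset, (-1:ℝ)^S.card := by
    rw [← Finset.sum_filter]
    congr 1
    ext S
    simp [Finset.mem_powerset]
  rw [hsub]
  have hcast : ∑ S ∈ (Rᶜ).powerset, (-1:ℝ)^S.card =
      ((∑ S ∈ (Rᶜ).powerset, (-1:ℤ)^S.card : ℤ) : ℝ) := by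
    push_cast
    rfl
  rw [hcast, Finset.sum_powerset_neg_one_pow_card]
  have hiff : (Rᶜ : Finset (Fin n)) = ∅ ↔ Function.Surjective g := by
    rw [Finset.compl_eq_empty_iff]
    constructor
    · intro h y
      have : y ∈ R := h ▸ Finset.mem_univ y
      rw [hR, Finset.mem_image] at this
      obtain ⟨j, -, hj⟩ := this
      exact ⟨j, hj⟩
    · intro h
      apply Finset.eq_univ_of_forall
      intro y
      obtain ⟨j, hj⟩ := h y
      exact hR ▸ Finset.mem_image.mpr ⟨j, Finset.mem_univ j, hj⟩
  split_ifs with h1 h2 h2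
  · norm_num
  · exact absurd (hiff.mp h1) h2
  · exact absurd (hiff.mpr h2) h1
  · norm_num

lemma comb (n : ℕ) (a : Fin n → Fin n → ℝ) :
    ∑ S : Finset (Fin n), (-1:ℝ)^(n - S.card) * ∏ j, (∑ i ∈ S, a i j) =
      ∑ σ : Equiv.Perm (Fin n), ∏ j, a (σ j) j := by
  classical
  have key : ∀ S : Finset (Fin n), ∏ j, (∑ i ∈ S, a i j) =
      ∑ g : Fin n → Fin n, (∏ j, a (g j) j) * (if ∀ j, g j ∈ S then 1 else 0) := by
    intro S
    have h1 : ∀ j, (∑ i ∈ S, a i j) = ∑ i : Fin n, (if i ∈ S then a i j else 0) := by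
      intro j
      rw [Finset.sum_ite_mem, Finset.univ_inter]
    calc ∏ j, (∑ i ∈ S, a i j) = ∏ j, ∑ i ∈ Finset.univ, (if i ∈ S then a i j else 0) := by
          exact Finset.prod_congr rfl fun j _ => h1 j
      _ = ∑ g ∈ Fintype.piFinset (fun _ : Fin n => (Finset.univ : Finset (Fin n))),
            ∏ j, (if g j ∈ S then a (g j) j else 0) := Finset.prod_univ_sum _ _
      _ = ∑ g : Fin n → Fin n, (∏ j, a (g j) j) * (if ∀ j, g j ∈ S then 1 else 0) := by
          rw [Fintype.piFinset_univ]
          refine Finset.sum_congr rfl fun g _ => ?_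
          have h2 : ∀ j : Fin n, (if g j ∈ S then a (g j) j else 0) =
              a (g j) j * (if g j ∈ S then 1 else 0) := by
            intro j; split_ifs <;> ring
          rw [Finset.prod_congr rfl fun j _ => h2 j, Finset.prod_mul_distrib,
            Finset.prod_boole]
          congr 1
          simp
  calc ∑ S : Finset (Fin n), (-1:ℝ)^(n - S.card) * ∏ j, (∑ i ∈ S, a i j)
      = ∑ S : Finset (Fin n), ∑ g : Fin n → Fin n,
          (∏ j, a (g j) j) * ((-1:ℝ)^(n - S.card) * (if ∀ j, g j ∈ S then 1 else 0)) := by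
        refine Finset.sum_congr rfl fun S _ => ?_
        rw [key S, Finset.mul_sum]
        exact Finset.sum_congr rfl fun g _ => by ring
    _ = ∑ g : Fin n → Fin n, ∑ S : Finset (Fin n),
          (∏ j, a (g j) j) * ((-1:ℝ)^(n - S.card) * (if ∀ j, g j ∈ S then 1 else 0)) :=
        Finset.sum_comm
    _ = ∑ g : Fin n → Fin n, (∏ j, a (g j) j) * (if Function.Surjective g then 1 else 0) := by
        refine Finset.sum_congr rfl fun g _ => ?_
        rw [← Finset.mul_sum, comb_inner n g]
    _ = ∑ g ∈ Finset.univ.filter (fun g : Fin n → Fin n => Function.Surjective g),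
          ∏ j, a (g j) j := by
        rw [Finset.sum_filter]
        refine Finset.sum_congr rfl fun g _ => ?_
        split_ifs <;> ring
    _ = ∑ σ : Equiv.Perm (Fin n), ∏ j, a (σ j) j := by
        refine Finset.sum_bij'
          (i := fun (g : Fin n → Fin n)
            (hg : g ∈ Finset.univ.filter fun g : Fin n → Fin n => Function.Surjective g) =>
            Equiv.ofBijective g ((Finset.mem_filter.mp hg).2.bijective_of_finite))
          (j := fun (σ : Equiv.Perm (Fin n)) (_ : σ ∈ (Finset.univ : Finset (Equiv.Perm (Fin n)))) =>
            (⇑σ : Fin n → Fin n)) ?_ ?_ ?_ ?_ ?_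
        · intro g hg
          exact Finset.mem_univ _
        · intro σ _
          exact Finset.mem_filter.mpr ⟨Finset.mem_univ _, σ.surjective⟩
        · intro g hg
          rfl
        · intro σ _
          exact Equiv.ext fun x => rfl
        · intro g hg
          rfl

theorem stmt0 (n : ℕ) :
    mixedVolume (stretchedCube n) =
      ∑ σ : Equiv.Perm (Fin n),
        (2 : ℝ) ^ (Finset.univ.filter fun i => σ i = i).card := by
  classical
  have hsc : ∀ (S : Finset (Fin n)) (j : Fin n),
      ∑ i ∈ S, (if i = j then (2:ℝ) else 1) = (S.card : ℝ) + if j ∈ S then 1 else 0 := by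
    intro S j
    have h : ∀ i ∈ S, (if i = j then (2:ℝ) else 1) = 1 + if i = j then 1 else 0 := by
      intro i _
      split_ifs <;> norm_num
    rw [Finset.sum_congr rfl h, Finset.sum_add_distrib, Finset.sum_const, nsmul_eq_mul,
      mul_one, Finset.sum_ite_eq' S j (fun _ => (1:ℝ))]
  have h1 : ∀ S : Finset (Fin n), (volume (∑ i ∈ S, stretchedCube n i)).toReal =
      ∏ j : Fin n, (∑ i ∈ S, (if i = j then (2:ℝ) else 1)) := by
    intro S
    rw [vol_sum]
    exact Finset.prod_congr rfl fun j _ => (hsc S j).symm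
  unfold mixedVolume
  rw [Finset.sum_congr rfl (fun S _ => by rw [h1 S]),
    comb n (fun i j => if i = j then (2:ℝ) else 1)]
  refine Finset.sum_congr rfl fun σ _ => ?_
  rw [Finset.prod_ite]
  simp [Finset.prod_const]
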